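/- arXiv:1705.10905 — 2 statements merged into one kernel-verified Lean document; each statement's English description precedes it below -/
import Mathlib

section
/- Let T be an abelian group, S a subgroup of T of finite index, and n a positive integer with gcd(n,[T:S])=1. Then the natural map S/nS -> T/nT induced by inclusion is an isomorphism. -/
/-- If `S ≤ T` has finite index coprime to `n`, then the natural map `S/nS → T/nT`
is an isomorphism (i.e. the composition `S → T → T/nT` is surjective with kernel `nS`). -/
theorem stmt_1 (T : Type*) [AddCommGroup T] (S : AddSubgroup T) (n : ℕ) (hn : 0 < n)
    (hfin : S.index ≠ 0) (hcop : Nat.gcd n S.index = 1) :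
    Function.Surjective
        ((QuotientAddGroup.mk' (n • (AddMonoidHom.id T)).range).comp S.subtype) ∧
      ((QuotientAddGroup.mk' (n • (AddMonoidHom.id T)).range).comp S.subtype).ker =
        (n • (AddMonoidHom.id ↥S)).range := by
  set m := S.index with hm
  have key : ∀ t : T, m • t ∈ S := fun t => AddSubgroup.nsmul_index_mem S t
  obtain ⟨a, b, hab⟩ : ∃ a b : ℤ, (n : ℤ) * a + (m : ℤ) * b = 1 := by
    refine ⟨Nat.gcdA n m, Nat.gcdB n m, ?_⟩
    have := Nat.gcd_eq_gcd_ab n m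
    rw [hcop] at this
    push_cast at this ⊢
    omega
  have decomp : ∀ t : T, t = n • (a • t) + b • (m • t) := by
    intro t
    have : ((n : ℤ) * a + (m : ℤ) * b) • t = t := by rw [hab, one_zsmul]
    calc t = ((n : ℤ) * a + (m : ℤ) * b) • t := this.symm
      _ = n • (a • t) + b • (m • t) := by
        rw [add_zsmul, mul_zsmul, mul_zsmul]
        simp only [natCast_zsmul]
        rw [smul_comm m b]
  constructor
  · intro q
    obtain ⟨t, rfl⟩ := QuotientAddGroup.mk'_surjective _ q
    refine ⟨⟨b • (m • t), AddSubgroup.zsmul_mem S (key t) b⟩, ?_⟩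
    simp only [AddMonoidHom.comp_apply, AddSubgroup.coe_subtype, QuotientAddGroup.mk'_apply]
    rw [QuotientAddGroup.eq]
    refine ⟨a • t, ?_⟩
    simp only [AddMonoidHom.smul_apply, AddMonoidHom.id_apply]
    have := decomp t
    linear_combination (norm := abel) -this
  · ext s
    simp only [AddMonoidHom.mem_ker, AddMonoidHom.comp_apply, AddSubgroup.coe_subtype,
      QuotientAddGroup.mk'_apply, QuotientAddGroup.eq_zero_iff, AddMonoidHom.mem_range,
      AddMonoidHom.smul_apply, AddMonoidHom.id_apply]
    constructor
    · rintro ⟨t, ht⟩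
      have htS : t ∈ S := by
        have h1 : t = a • (n • t) + b • (m • t) := by
          have := decomp t
          rwa [smul_comm n a t] at this
        rw [h1, ht]
        exact AddSubgroup.add_mem S (AddSubgroup.zsmul_mem S s.2 a)
          (AddSubgroup.zsmul_mem S (key t) b)
      exact ⟨⟨t, htS⟩, by ext; simpa using ht⟩
    · rintro ⟨u, rfl⟩
      exact ⟨u, by simp⟩
end

section
/- Let G be a cyclic group of order p^k generated by σ, where p is prime and n is a power of p with n | p^{k-1}. Set N_n = Σ_{i=1}^{p^k/n} σ^{in} and R = Z[G]/N_n Z[G]. For any positive integer d with n' | n where n' is a power of p dividing p^{k-1}, the element 1 - σ^{n'} is a nonzerodivisor in R. -/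
open Polynomial

namespace Stmt5Aux

variable (M : ℕ) [NeZero M]

noncomputable def S : MonoidAlgebra ℤ (Multiplicative (ZMod M)) :=
  MonoidAlgebra.of ℤ (Multiplicative (ZMod M)) (Multiplicative.ofAdd 1)

lemma sigma_pow (j : ℕ) :
    (Multiplicative.ofAdd (1 : ZMod M)) ^ j = Multiplicative.ofAdd ((j : ZMod M)) := by
  induction j with
  | zero => simp
  | succ j ih => rw [pow_succ, ih, ← ofAdd_add]; push_cast; ring_nf

lemma S_pow (j : ℕ) :
    (S M) ^ j = MonoidAlgebra.of ℤ (Multiplicative (ZMod M))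
      ((Multiplicative.ofAdd (1 : ZMod M)) ^ j) := by
  rw [S, ← map_pow]

lemma S_pow_M : (S M) ^ M = 1 := by
  rw [S_pow, sigma_pow]
  simp [MonoidAlgebra.one_def, MonoidAlgebra.of_apply]

lemma aeval_surj (x : MonoidAlgebra ℤ (Multiplicative (ZMod M))) :
    ∃ f : ℤ[X], Polynomial.aeval (S M) f = x := by
  induction x using MonoidAlgebra.induction_on with
  | of g =>
      refine ⟨X ^ (Multiplicative.toAdd g).val, ?_⟩
      rw [map_pow, aeval_X, S_pow, sigma_pow]
      have h : (((Multiplicative.toAdd g).val : ZMod M)) = Multiplicative.toAdd g :=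
        ZMod.natCast_rightInverse _
      rw [h, ofAdd_toAdd]
  | add f g hf hg =>
      obtain ⟨a, ha⟩ := hf; obtain ⟨b, hb⟩ := hg
      exact ⟨a + b, by rw [map_add, ha, hb]⟩
  | smul r f hf =>
      obtain ⟨a, ha⟩ := hf
      exact ⟨r • a, by rw [map_smul, ha]⟩

lemma aeval_ker (hM : 1 < M) (f : ℤ[X]) (hf : Polynomial.aeval (S M) f = 0) :
    ((X : ℤ[X]) ^ M - 1) ∣ f := by
  haveI : Fact (1 < M) := ⟨hM⟩
  set I : Ideal ℤ[X] := Ideal.span {(X : ℤ[X]) ^ M - 1} with hI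
  set q : ℤ[X] →ₐ[ℤ] ℤ[X] ⧸ I := Ideal.Quotient.mkₐ ℤ I with hqdef
  have h0 : q ((X : ℤ[X]) ^ M - 1) = 0 := by
    simp only [hqdef, Ideal.Quotient.mkₐ_eq_mk]
    exact (Ideal.Quotient.eq_zero_iff_mem).2 (Ideal.subset_span (Set.mem_singleton _))
  have hq1 : (q X) ^ M = 1 := by
    have h1 : q ((X : ℤ[X]) ^ M) = q 1 := by
      have := sub_eq_zero.mp (by rwa [map_sub] at h0)
      simpa using this
    rw [← map_pow, h1, map_one]
  have hperiod : ∀ j : ℕ, (q X) ^ j = (q X) ^ (j % M) := by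
    intro j
    conv_lhs => rw [← Nat.div_add_mod j M]
    rw [pow_add, pow_mul, hq1, one_pow, one_mul]
  set χ : Multiplicative (ZMod M) →* (ℤ[X] ⧸ I) :=
    { toFun := fun g => (q X) ^ (Multiplicative.toAdd g).val
      map_one' := by simp
      map_mul' := by
        intro x y
        simp only [toAdd_mul, ZMod.val_add, ← pow_add]
        exact (hperiod _).symm } with hχ
  set φ : MonoidAlgebra ℤ (Multiplicative (ZMod M)) →ₐ[ℤ] (ℤ[X] ⧸ I) :=
    MonoidAlgebra.lift ℤ (ℤ[X] ⧸ I) (Multiplicative (ZMod M)) χ with hφ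
  have hφS : φ (S M) = q X := by
    rw [S, hφ, MonoidAlgebra.lift_of, hχ]
    simp [ZMod.val_one]
  have h1 := Polynomial.aeval_algHom_apply φ (S M) f
  have h2 := Polynomial.aeval_algHom_apply q X f
  rw [hφS] at h1
  rw [Polynomial.aeval_X_left_apply] at h2
  have hcomp : φ (Polynomial.aeval (S M) f) = q f := h1.symm.trans h2
  rw [hf, map_zero] at hcomp
  have hfI : f ∈ I := by
    have hq0 : q f = 0 := hcomp.symm
    rwa [hqdef, Ideal.Quotient.mkₐ_eq_mk, Ideal.Quotient.eq_zero_iff_mem] at hq0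
  rwa [hI, Ideal.mem_span_singleton] at hfI

lemma Nmap (M n : ℕ) [NeZero M] (hnM : n ∣ M) (hM0 : M ≠ 0) :
    Polynomial.aeval (S M) (∑ i ∈ Finset.range (M / n), ((X : ℤ[X]) ^ n) ^ i)
      = ∑ i ∈ Finset.Icc 1 (M / n), MonoidAlgebra.of ℤ (Multiplicative (ZMod M))
          (Multiplicative.ofAdd (1 : ZMod M) ^ (i * n)) := by
  have hmn : M / n * n = M := Nat.div_mul_cancel hnM
  have hSpow : ∀ j : ℕ, Polynomial.aeval (S M) ((X : ℤ[X]) ^ j)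
      = MonoidAlgebra.of ℤ (Multiplicative (ZMod M))
        (Multiplicative.ofAdd (1 : ZMod M) ^ j) := by
    intro j
    rw [map_pow, aeval_X, S_pow]
  have hterm : ∀ i : ℕ, Polynomial.aeval (S M) (((X : ℤ[X]) ^ n) ^ i)
      = MonoidAlgebra.of ℤ (Multiplicative (ZMod M))
        (Multiplicative.ofAdd (1 : ZMod M) ^ (i * n)) := by
    intro i
    rw [← pow_mul, hSpow, mul_comm]
  rw [map_sum]
  simp only [hterm]
  set g : ℕ → MonoidAlgebra ℤ (Multiplicative (ZMod M)) :=
    fun i => MonoidAlgebra.of ℤ (Multiplicative (ZMod M))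
      (Multiplicative.ofAdd (1 : ZMod M) ^ (i * n)) with hg
  have hgm : g (M / n) = g 0 := by
    have hσm : (Multiplicative.ofAdd (1 : ZMod M)) ^ (M / n * n)
        = (Multiplicative.ofAdd (1 : ZMod M)) ^ (0 * n) := by
      rw [sigma_pow, sigma_pow, hmn]
      simp
    simp only [hg, hσm]
  have h1 : ∑ i ∈ Finset.Icc 1 (M / n), g i = ∑ i ∈ Finset.range (M / n), g (i + 1) := by
    rw [← Finset.Ico_add_one_right_eq_Icc, Finset.sum_Ico_eq_sum_range]
    exact Finset.sum_congr (by rw [Nat.add_sub_cancel]) fun i _ => by rw [add_comm]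
  have a1 := Finset.sum_range_succ g (M / n)
  have a2 := Finset.sum_range_succ' g (M / n)
  rw [hgm] at a1
  have h2 : ∑ i ∈ Finset.range (M / n), g (i + 1) = ∑ i ∈ Finset.range (M / n), g i :=
    add_right_cancel (a2.symm.trans a1)
  rw [h1, h2]

lemma main (M n n' : ℕ) [NeZero M] (hM1 : 1 < M) (hnM : n ∣ M) (hn0 : 0 < n) (hn' : n' ∣ n) :
    ∀ r : MonoidAlgebra ℤ (Multiplicative (ZMod M)) ⧸ Ideal.span
        {∑ i ∈ Finset.Icc 1 (M / n), MonoidAlgebra.of ℤ (Multiplicative (ZMod M))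
          (Multiplicative.ofAdd (1 : ZMod M) ^ (i * n))},
      (Ideal.Quotient.mk _ (1 - MonoidAlgebra.of ℤ (Multiplicative (ZMod M))
          (Multiplicative.ofAdd (1 : ZMod M) ^ n'))) * r = 0 → r = 0 := by
  intro r hr
  have hmn : M / n * n = M := Nat.div_mul_cancel hnM
  have hm0 : M / n ≠ 0 := by
    have := Nat.le_of_dvd (by omega) hnM
    intro h0
    rw [h0, zero_mul] at hmn
    omega
  set Np : ℤ[X] := ∑ i ∈ Finset.range (M / n), ((X : ℤ[X]) ^ n) ^ i with hNp
  have hNp_mul : Np * ((X : ℤ[X]) ^ n - 1) = X ^ M - 1 := by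
    rw [hNp, geom_sum_mul, ← pow_mul, mul_comm n (M / n), hmn]
  have hNp_monic : Np.Monic :=
    (monic_X_pow n).geom_sum (by simpa using hn0) hm0
  have hSpow : ∀ j : ℕ, Polynomial.aeval (S M) ((X : ℤ[X]) ^ j)
      = MonoidAlgebra.of ℤ (Multiplicative (ZMod M))
        (Multiplicative.ofAdd (1 : ZMod M) ^ j) := by
    intro j
    rw [map_pow, aeval_X, S_pow]
  have hNmap := Nmap M n hnM (by omega)
  rw [← hNp] at hNmap
  obtain ⟨x, hx⟩ := Ideal.Quotient.mk_surjective r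
  obtain ⟨f, hfx⟩ := aeval_surj M x
  rw [← hx, ← map_mul, Ideal.Quotient.eq_zero_iff_mem, Ideal.mem_span_singleton] at hr
  obtain ⟨h, hh⟩ := hr
  obtain ⟨h', hh'⟩ := aeval_surj M h
  have key : Polynomial.aeval (S M) ((1 - (X : ℤ[X]) ^ n') * f - Np * h') = 0 := by
    rw [map_sub, map_mul, map_mul, map_sub, map_one, hfx, hNmap, hh', hSpow, hh]
    ring
  have hdvd := aeval_ker M hM1 _ key
  rw [← hNp_mul] at hdvd
  have hNp_dvd : Np ∣ (1 - (X : ℤ[X]) ^ n') * f := by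
    obtain ⟨c, hc⟩ := hdvd
    exact ⟨(X ^ n - 1) * c + h', by linear_combination hc⟩
  set Nq : ℚ[X] := Np.map (Int.castRingHom ℚ) with hNq
  have hsep : (Nq * ((X : ℚ[X]) ^ n - 1)).Separable := by
    have hmapeq : Nq * ((X : ℚ[X]) ^ n - 1) = X ^ M - Polynomial.C 1 := by
      have h5 := congrArg (Polynomial.map (Int.castRingHom ℚ)) hNp_mul
      simpa [Polynomial.map_mul, Polynomial.map_sub, Polynomial.map_pow] using h5
    rw [hmapeq]
    exact Polynomial.separable_X_pow_sub_C (1 : ℚ)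
      (by exact_mod_cast (by omega : M ≠ 0)) one_ne_zero
  have hcop : IsCoprime Nq ((X : ℚ[X]) ^ n - 1) := hsep.isCoprime
  have hdvd_n' : ((X : ℚ[X]) ^ n' - 1) ∣ ((X : ℚ[X]) ^ n - 1) := by
    obtain ⟨c, hc⟩ := hn'
    rw [hc, pow_mul]
    simpa using sub_dvd_pow_sub_pow ((X : ℚ[X]) ^ n') 1 c
  have hcop' : IsCoprime Nq ((X : ℚ[X]) ^ n' - 1) :=
    (hcop.symm.of_isCoprime_of_dvd_left hdvd_n').symm
  have hq : Nq ∣ ((X : ℚ[X]) ^ n' - 1) * f.map (Int.castRingHom ℚ) := by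
    have h3 := Polynomial.map_dvd (Int.castRingHom ℚ) hNp_dvd
    rw [Polynomial.map_mul, Polynomial.map_sub, Polynomial.map_one, Polynomial.map_pow,
      Polynomial.map_X] at h3
    have h4 : Nq ∣ -((1 - (X : ℚ[X]) ^ n') * f.map (Int.castRingHom ℚ)) :=
      Dvd.dvd.neg_right h3
    have h5 : ((X : ℚ[X]) ^ n' - 1) * f.map (Int.castRingHom ℚ)
        = -((1 - (X : ℚ[X]) ^ n') * f.map (Int.castRingHom ℚ)) := by ring
    rwa [← h5] at h4
  have hfq : Nq ∣ f.map (Int.castRingHom ℚ) := hcop'.dvd_of_dvd_mul_left hq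
  have hNf : Np ∣ f :=
    (Polynomial.map_dvd_map (Int.castRingHom ℚ) Int.cast_injective hNp_monic).1 hfq
  obtain ⟨w, hw⟩ := hNf
  rw [← hx, ← hfx, hw, map_mul, hNmap, map_mul,
    Ideal.Quotient.eq_zero_iff_mem.2 (Ideal.subset_span (Set.mem_singleton _)), zero_mul]

end Stmt5Aux

/-- In `R = ℤ[G]/(N_n)` for `G` cyclic of order `p^k` generated by `σ`, with `n` a
`p`-power dividing `p^(k-1)` and `n'` a `p`-power dividing `n`, the image of `1 - σ^{n'}`
is a nonzerodivisor. -/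
theorem stmt_5 (p k n n' a b : ℕ) (hp : p.Prime) (hk : 1 ≤ k)
    (hna : n = p ^ a) (hn : n ∣ p ^ (k - 1)) (hnb : n' = p ^ b) (hn' : n' ∣ n) :
    letI G := Multiplicative (ZMod (p ^ k))
    letI σ : G := Multiplicative.ofAdd 1
    letI N : MonoidAlgebra ℤ G :=
      ∑ i ∈ Finset.Icc 1 (p ^ k / n), MonoidAlgebra.of ℤ G (σ ^ (i * n))
    ∀ r : MonoidAlgebra ℤ G ⧸ Ideal.span {N},
      (Ideal.Quotient.mk (Ideal.span {N}) (1 - MonoidAlgebra.of ℤ G (σ ^ n'))) * r = 0 →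
        r = 0 := by
  have hM1 : 1 < p ^ k := Nat.one_lt_pow (by omega) hp.one_lt
  haveI : NeZero (p ^ k) := ⟨by omega⟩
  exact Stmt5Aux.main (p ^ k) n n' hM1
    (hn.trans (pow_dvd_pow p (Nat.sub_le k 1)))
    (hna ▸ pow_pos hp.pos a) hn'
end
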